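/- Every quadratic polynomial q on ℝ² with nonzero coefficient vector that vanishes at the five points A, B, C, P, Q also vanishes at P' and at Q'. (Equivalently: the conic 𝒞_P through A, B, C, P, Q also passes through the isotomic conjugate P' of P and through Q' = K(P).) -/

import Mathlib

noncomputable section

abbrev Pt := EuclideanSpace ℝ (Fin 2)

/-- The quadratic polynomial `a*x^2 + b*x*y + c*y^2 + d*x + e*y + f` evaluated at a point. -/
def qeval (a b c d e f : ℝ) (W : Pt) : ℝ :=
  a * (W 0)^2 + b * (W 0) * (W 1) + c * (W 1)^2 + d * (W 0) + e * (W 1) + f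

private lemma bary (a b c d e f A0 A1 B0 B1 C0 C1 x y z u v w : ℝ)
    (hxyz : x + y + z = 1)
    (hA : a * A0^2 + b * A0 * A1 + c * A1^2 + d * A0 + e * A1 + f = 0)
    (hB : a * B0^2 + b * B0 * B1 + c * B1^2 + d * B0 + e * B1 + f = 0)
    (hC : a * C0^2 + b * C0 * C1 + c * C1^2 + d * C0 + e * C1 + f = 0)
    (hu : u = 2*a*A0*B0 + b*(A0*B1 + A1*B0) + 2*c*A1*B1 + d*(A0+B0) + e*(A1+B1) + 2*f)
    (hv : v = 2*a*B0*C0 + b*(B0*C1 + B1*C0) + 2*c*B1*C1 + d*(B0+C0) + e*(B1+C1) + 2*f)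
    (hw : w = 2*a*C0*A0 + b*(C0*A1 + C1*A0) + 2*c*C1*A1 + d*(C0+A0) + e*(C1+A1) + 2*f) :
    a * (x*A0 + y*B0 + z*C0)^2 + b * (x*A0 + y*B0 + z*C0) * (x*A1 + y*B1 + z*C1)
      + c * (x*A1 + y*B1 + z*C1)^2 + d * (x*A0 + y*B0 + z*C0) + e * (x*A1 + y*B1 + z*C1) + f
      = x*y*u + y*z*v + z*x*w := by
  subst hu hv hw
  have hz : z = 1 - x - y := by linarith
  subst hz
  linear_combination x^2 * hA + y^2 * hB + (1-x-y)^2 * hC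

private lemma alg (α β γ t u v w : ℝ) (hα : α ≠ 0) (hβ : β ≠ 0) (hγ : γ ≠ 0)
    (hsum : α + β + γ = 1) (ht : t * (α*β + β*γ + γ*α) = 1)
    (e1 : α*β*u + β*γ*v + γ*α*w = 0)
    (e2 : (1 - t*(β*γ))/2 * ((1 - t*(γ*α))/2) * u + (1 - t*(γ*α))/2 * ((1 - t*(α*β))/2) * v
        + (1 - t*(α*β))/2 * ((1 - t*(β*γ))/2) * w = 0) :
    (t*(β*γ)) * (t*(γ*α)) * u + (t*(γ*α)) * (t*(α*β)) * v + (t*(α*β)) * (t*(β*γ)) * w = 0 ∧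
    (β+γ)/2 * ((γ+α)/2) * u + (γ+α)/2 * ((α+β)/2) * v + (α+β)/2 * ((β+γ)/2) * w = 0 := by
  have hγ2 : γ = 1 - α - β := by linarith
  subst hγ2
  have ht0 : t ≠ 0 := by
    intro h
    rw [h, zero_mul] at ht
    norm_num at ht
  have h1 : (1 - t*(β*(1 - α - β))) = t*(α*(β + (1 - α - β))) := by linear_combination -ht
  have h2 : (1 - t*((1 - α - β)*α)) = t*(β*((1 - α - β) + α)) := by linear_combination -ht
  have h3 : (1 - t*(α*β)) = t*((1 - α - β)*(α + β)) := by linear_combination -ht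
  rw [h1, h2, h3] at e2
  have k3t : (t*t*(α*β*(1 - α - β))) * ((1 - α - β)*u + α*v + β*w) = 0 := by
    linear_combination 4*e2 - (t^2*(α*β + β*(1 - α - β) + (1 - α - β)*α))*e1
  have h0 : (t*t*(α*β*(1 - α - β))) ≠ 0 :=
    mul_ne_zero (mul_ne_zero ht0 ht0) (mul_ne_zero (mul_ne_zero hα hβ) hγ)
  have k3 : (1 - α - β)*u + α*v + β*w = 0 := (mul_eq_zero.mp k3t).resolve_left h0
  constructor
  · linear_combination (t*t*(α*β*(1 - α - β)))*k3
  · linear_combination (1/4 : ℝ)*k3 + (1/4 : ℝ)*e1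

theorem stmt0
    (A B C : Pt) (hABC : AffineIndependent ℝ ![A, B, C])
    (α β γ : ℝ) (hsum : α + β + γ = 1)
    (hα : α ≠ 0) (hβ : β ≠ 0) (hγ : γ ≠ 0)
    (hβγ : β + γ ≠ 0) (hγα : γ + α ≠ 0) (hαβ : α + β ≠ 0)
    (hab : α ≠ β) (hbc : β ≠ γ) (hca : γ ≠ α)
    (hs : α * β + β * γ + γ * α ≠ 0)
    (G : Pt) (hG : G = (3:ℝ)⁻¹ • (A + B + C))
    (P : Pt) (hP : P = α • A + β • B + γ • C)
    (P' : Pt)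
    (hP'' : P' = (α * β + β * γ + γ * α)⁻¹ • ((β * γ) • A + (γ * α) • B + (α * β) • C))
    (Q : Pt) (hQ : Q = G - (2:ℝ)⁻¹ • (P' - G))
    (Q' : Pt) (hQ' : Q' = G - (2:ℝ)⁻¹ • (P - G))
    (a b c d e f : ℝ) (hq : (a, b, c, d, e, f) ≠ (0, 0, 0, 0, 0, 0))
    (hqA : qeval a b c d e f A = 0) (hqB : qeval a b c d e f B = 0)
    (hqC : qeval a b c d e f C = 0) (hqP : qeval a b c d e f P = 0)
    (hqQ : qeval a b c d e f Q = 0)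
    :
    qeval a b c d e f P' = 0 ∧ qeval a b c d e f Q' = 0 := by
  set t : ℝ := (α * β + β * γ + γ * α)⁻¹ with htdef
  have ht : t * (α*β + β*γ + γ*α) = 1 := inv_mul_cancel₀ hs
  -- coordinates
  have hGc : ∀ i, G i = (3:ℝ)⁻¹ * (A i + B i + C i) := by
    intro i
    rw [hG]
    simp [PiLp.smul_apply, PiLp.add_apply, smul_eq_mul]
    ring
  have hPc : ∀ i, P i = α * A i + β * B i + γ * C i := by
    intro i
    rw [hP]
    simp [PiLp.smul_apply, PiLp.add_apply, smul_eq_mul]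
  have hP'c : ∀ i, P' i = t*(β*γ) * A i + t*(γ*α) * B i + t*(α*β) * C i := by
    intro i
    rw [hP'']
    simp only [PiLp.smul_apply, PiLp.add_apply, smul_eq_mul]
    ring
  have hQc : ∀ i, Q i = (1 - t*(β*γ))/2 * A i + (1 - t*(γ*α))/2 * B i
      + (1 - t*(α*β))/2 * C i := by
    intro i
    rw [hQ]
    simp only [PiLp.sub_apply, PiLp.smul_apply, smul_eq_mul]
    rw [hGc i, hP'c i]
    ring
  have hQ'c : ∀ i, Q' i = (β+γ)/2 * A i + (γ+α)/2 * B i + (α+β)/2 * C i := by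
    intro i
    rw [hQ']
    simp only [PiLp.sub_apply, PiLp.smul_apply, smul_eq_mul]
    rw [hGc i, hPc i]
    have h1 : γ = 1 - α - β := by linarith
    rw [h1]; ring
  simp only [qeval] at hqA hqB hqC hqP hqQ ⊢
  simp only [hPc] at hqP
  simp only [hQc] at hqQ
  obtain ⟨u, hu⟩ : ∃ u : ℝ, u = 2*a*(A 0)*(B 0) + b*((A 0)*(B 1) + (A 1)*(B 0))
      + 2*c*(A 1)*(B 1) + d*((A 0)+(B 0)) + e*((A 1)+(B 1)) + 2*f := ⟨_, rfl⟩
  obtain ⟨v, hv⟩ : ∃ v : ℝ, v = 2*a*(B 0)*(C 0) + b*((B 0)*(C 1) + (B 1)*(C 0))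
      + 2*c*(B 1)*(C 1) + d*((B 0)+(C 0)) + e*((B 1)+(C 1)) + 2*f := ⟨_, rfl⟩
  obtain ⟨w, hw⟩ : ∃ w : ℝ, w = 2*a*(C 0)*(A 0) + b*((C 0)*(A 1) + (C 1)*(A 0))
      + 2*c*(C 1)*(A 1) + d*((C 0)+(A 0)) + e*((C 1)+(A 1)) + 2*f := ⟨_, rfl⟩
  have hb1 := bary a b c d e f (A 0) (A 1) (B 0) (B 1) (C 0) (C 1) α β γ u v w
    hsum hqA hqB hqC hu hv hw
  have e1 : α*β*u + β*γ*v + γ*α*w = 0 := by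
    rw [← hb1]; linear_combination hqP
  have hsumQ : (1 - t*(β*γ))/2 + (1 - t*(γ*α))/2 + (1 - t*(α*β))/2 = 1 := by
    linear_combination (-(1:ℝ)/2) * ht
  have hb2 := bary a b c d e f (A 0) (A 1) (B 0) (B 1) (C 0) (C 1)
    ((1 - t*(β*γ))/2) ((1 - t*(γ*α))/2) ((1 - t*(α*β))/2) u v w
    hsumQ hqA hqB hqC hu hv hw
  have e2 : (1 - t*(β*γ))/2 * ((1 - t*(γ*α))/2) * u + (1 - t*(γ*α))/2 * ((1 - t*(α*β))/2) * v
      + (1 - t*(α*β))/2 * ((1 - t*(β*γ))/2) * w = 0 := by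
    rw [← hb2]; linear_combination hqQ
  obtain ⟨c1, c2⟩ := alg α β γ t u v w hα hβ hγ hsum ht e1 e2
  constructor
  · have hsumP' : t*(β*γ) + t*(γ*α) + t*(α*β) = 1 := by linear_combination ht
    have hb3 := bary a b c d e f (A 0) (A 1) (B 0) (B 1) (C 0) (C 1)
      (t*(β*γ)) (t*(γ*α)) (t*(α*β)) u v w hsumP' hqA hqB hqC hu hv hw
    simp only [hP'c]
    rw [hb3]; linear_combination c1
  · have hsumQ' : (β+γ)/2 + (γ+α)/2 + (α+β)/2 = 1 := by linarith
    have hb4 := bary a b c d e f (A 0) (A 1) (B 0) (B 1) (C 0) (C 1)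
      ((β+γ)/2) ((γ+α)/2) ((α+β)/2) u v w hsumQ' hqA hqB hqC hu hv hw
    simp only [hQ'c]
    rw [hb4]; linear_combination c2
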